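/- For any two integers r ≥ 1 and t ≥ 1, the odd Hadwiger number of the strong product of the star with r leaves and the star with t leaves satisfies: oh(S_r ⊠ S_t) ≥ r + 1 if r = t, and oh(S_r ⊠ S_t) ≥ min{r, t} + 2 if r ≠ t. -/

import Mathlib

open SimpleGraph

/-- `H` is an odd minor of `G`: there are pairwise vertex-disjoint subtrees of `G`, one for
each vertex of `H`, and a 2-colouring of the vertices which is proper on each tree, such that
for every edge of `H` there is a monochromatic edge of `G` between the corresponding trees. -/
def IsOddMinorOf {W V : Type*} (H : SimpleGraph W) (G : SimpleGraph V) : Prop :=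
  ∃ (T : W → G.Subgraph) (c : V → Fin 2),
    (∀ w, (T w).coe.IsTree) ∧
    (Pairwise fun w w' => Disjoint (T w).verts (T w').verts) ∧
    (∀ w, ∀ x y, (T w).Adj x y → c x ≠ c y) ∧
    (∀ w w', H.Adj w w' →
      ∃ x y, x ∈ (T w).verts ∧ y ∈ (T w').verts ∧ G.Adj x y ∧ c x = c y)

/-- The odd Hadwiger number of `G`: the largest `r` such that `K_r` is an odd minor of `G`. -/
noncomputable def oddHadwiger {V : Type*} [Fintype V] (G : SimpleGraph V) : ℕ :=
  sSup {r : ℕ | IsOddMinorOf (⊤ : SimpleGraph (Fin r)) G}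

/-- The Cartesian product `G □ H`. -/
def cartProd {α β : Type*} (G : SimpleGraph α) (H : SimpleGraph β) : SimpleGraph (α × β) where
  Adj x y := (x.1 = y.1 ∧ H.Adj x.2 y.2) ∨ (x.2 = y.2 ∧ G.Adj x.1 y.1)
  symm := by
    constructor
    rintro x y (⟨h1, h2⟩ | ⟨h1, h2⟩)
    · exact Or.inl ⟨h1.symm, h2.symm⟩
    · exact Or.inr ⟨h1.symm, h2.symm⟩
  loopless := by
    constructor
    rintro x (⟨_, h⟩ | ⟨_, h⟩)
    · exact H.irrefl h
    · exact G.irrefl h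

/-- The strong product `G ⊠ H`. -/
def strongProd {α β : Type*} (G : SimpleGraph α) (H : SimpleGraph β) : SimpleGraph (α × β) where
  Adj x y := (x.1 = y.1 ∧ H.Adj x.2 y.2) ∨ (x.2 = y.2 ∧ G.Adj x.1 y.1) ∨
    (G.Adj x.1 y.1 ∧ H.Adj x.2 y.2)
  symm := by
    constructor
    rintro x y (⟨h1, h2⟩ | ⟨h1, h2⟩ | ⟨h1, h2⟩)
    · exact Or.inl ⟨h1.symm, h2.symm⟩
    · exact Or.inr (Or.inl ⟨h1.symm, h2.symm⟩)
    · exact Or.inr (Or.inr ⟨h1.symm, h2.symm⟩)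
  loopless := by
    constructor
    rintro x (⟨_, h⟩ | ⟨_, h⟩ | ⟨h, _⟩)
    · exact H.irrefl h
    · exact G.irrefl h
    · exact G.irrefl h

/-- The lexicographic product `G ∘ H`. -/
def lexProd {α β : Type*} (G : SimpleGraph α) (H : SimpleGraph β) : SimpleGraph (α × β) where
  Adj x y := G.Adj x.1 y.1 ∨ (x.1 = y.1 ∧ H.Adj x.2 y.2)
  symm := by
    constructor
    rintro x y (h | ⟨h1, h2⟩)
    · exact Or.inl h.symm
    · exact Or.inr ⟨h1.symm, h2.symm⟩
  loopless := by
    constructor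
    rintro x (h | ⟨_, h⟩)
    · exact G.irrefl h
    · exact H.irrefl h

/-- The direct (tensor) product `G × H`. -/
def dirProd {α β : Type*} (G : SimpleGraph α) (H : SimpleGraph β) : SimpleGraph (α × β) where
  Adj x y := G.Adj x.1 y.1 ∧ H.Adj x.2 y.2
  symm := by
    constructor
    rintro x y ⟨h1, h2⟩
    exact ⟨h1.symm, h2.symm⟩
  loopless := by
    constructor
    rintro x ⟨h, _⟩
    exact G.irrefl h

/-- The star with `k` leaves, `S_k = K_{1,k}`. -/
def star (k : ℕ) : SimpleGraph (Fin 1 ⊕ Fin k) := completeBipartiteGraph (Fin 1) (Fin k)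

/-! ### Auxiliary material -/

section Aux

lemma strongProd_adj' {α β : Type*} (G : SimpleGraph α) (H : SimpleGraph β) (x y : α × β) :
    (strongProd G H).Adj x y ↔ (x.1 = y.1 ∧ H.Adj x.2 y.2) ∨ (x.2 = y.2 ∧ G.Adj x.1 y.1) ∨
      (G.Adj x.1 y.1 ∧ H.Adj x.2 y.2) := Iff.rfl

lemma star_adj' (k : ℕ) (x y : Fin 1 ⊕ Fin k) :
    (_root_.star k).Adj x y ↔ (x.isLeft ∧ y.isRight ∨ x.isRight ∧ y.isLeft) := Iff.rfl

lemma singleton_isTree {V : Type*} (G : SimpleGraph V) (v : V) :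
    (G.singletonSubgraph v).coe.IsTree := by
  constructor
  · constructor
    intro x y
    have hx := x.2; have hy := y.2
    simp only [singletonSubgraph_verts, Set.mem_singleton_iff] at hx hy
    have : x = y := Subtype.ext (hx.trans hy.symm)
    exact this ▸ Reachable.refl x
  · have : (G.singletonSubgraph v).coe = ⊥ := by
      ext x y
      exact Iff.rfl
    rw [this]
    exact isAcyclic_bot

def path3Sub {V : Type*} (G : SimpleGraph V) (a m b : V) (h1 : G.Adj a m) (h2 : G.Adj m b) :
    G.Subgraph where
  verts := {a, m, b}
  Adj x y := (x = a ∧ y = m) ∨ (x = m ∧ y = a) ∨ (x = m ∧ y = b) ∨ (x = b ∧ y = m)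
  adj_sub := by
    rintro x y (⟨rfl, rfl⟩ | ⟨rfl, rfl⟩ | ⟨rfl, rfl⟩ | ⟨rfl, rfl⟩)
    exacts [h1, h1.symm, h2, h2.symm]
  edge_vert := by
    rintro x y (⟨rfl, rfl⟩ | ⟨rfl, rfl⟩ | ⟨rfl, rfl⟩ | ⟨rfl, rfl⟩) <;> simp
  symm := by
    constructor
    rintro x y (⟨rfl, rfl⟩ | ⟨rfl, rfl⟩ | ⟨rfl, rfl⟩ | ⟨rfl, rfl⟩) <;> tauto

lemma path3Sub_verts {V : Type*} (G : SimpleGraph V) (a m b : V) (h1 : G.Adj a m)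
    (h2 : G.Adj m b) : (path3Sub G a m b h1 h2).verts = {a, m, b} := rfl

lemma path3Sub_adj {V : Type*} (G : SimpleGraph V) (a m b : V) (h1 : G.Adj a m)
    (h2 : G.Adj m b) (x y : V) : (path3Sub G a m b h1 h2).Adj x y ↔
      (x = a ∧ y = m) ∨ (x = m ∧ y = a) ∨ (x = m ∧ y = b) ∨ (x = b ∧ y = m) := Iff.rfl

lemma path3Sub_isTree {V : Type*} (G : SimpleGraph V) (a m b : V) (h1 : G.Adj a m)
    (h2 : G.Adj m b) : (path3Sub G a m b h1 h2).coe.IsTree := by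
  classical
  set H := path3Sub G a m b h1 h2 with hH
  have hmv : m ∈ H.verts := by simp [hH, path3Sub]
  have hav : a ∈ H.verts := by simp [hH, path3Sub]
  have hbv : b ∈ H.verts := by simp [hH, path3Sub]
  constructor
  · rw [connected_iff]
    refine ⟨?_, ⟨⟨m, hmv⟩⟩⟩
    have key : ∀ x : H.verts, H.coe.Reachable x ⟨m, hmv⟩ := by
      rintro ⟨x, hx⟩
      have : x = a ∨ x = m ∨ x = b := by simpa [hH, path3Sub] using hx
      rcases this with rfl | rfl | rfl
      · exact (SimpleGraph.Adj.reachable (by simp [Subgraph.coe_adj, hH, path3Sub]))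
      · rfl
      · exact (SimpleGraph.Adj.reachable (by simp [Subgraph.coe_adj, hH, path3Sub]))
    intro x y
    exact (key x).trans (key y).symm
  · intro v c hc
    have hlen : 3 ≤ c.length := hc.three_le_length
    have hnodup : c.edges.Nodup := hc.edges_nodup
    have hsub : ∀ e ∈ c.edges, e = s(⟨a, hav⟩, ⟨m, hmv⟩) ∨ e = s(⟨m, hmv⟩, ⟨b, hbv⟩) := by
      intro e he
      have : e ∈ H.coe.edgeSet := c.edges_subset_edgeSet he
      induction e with
      | h x y =>
        rw [SimpleGraph.mem_edgeSet] at this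
        rcases x with ⟨x, hx⟩; rcases y with ⟨y, hy⟩
        have : (x = a ∧ y = m) ∨ (x = m ∧ y = a) ∨ (x = m ∧ y = b) ∨ (x = b ∧ y = m) := this
        rcases this with ⟨rfl, rfl⟩ | ⟨rfl, rfl⟩ | ⟨rfl, rfl⟩ | ⟨rfl, rfl⟩ <;>
          simp [Sym2.eq_swap]
    have hcard : c.edges.toFinset.card = c.edges.length := List.toFinset_card_of_nodup hnodup
    have hsub' : c.edges.toFinset ⊆ {s(⟨a, hav⟩, ⟨m, hmv⟩), s(⟨m, hmv⟩, ⟨b, hbv⟩)} := by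
      intro e he
      rw [List.mem_toFinset] at he
      rcases hsub e he with h | h <;> simp [h]
    have h2' : c.edges.toFinset.card ≤ 2 :=
      le_trans (Finset.card_le_card hsub') ((Finset.card_insert_le _ _).trans (by simp))
    rw [hcard, SimpleGraph.Walk.length_edges] at h2'
    omega

/-- The colouring used in all constructions. -/
def col {r t : ℕ} : (Fin 1 ⊕ Fin r) × (Fin 1 ⊕ Fin t) → Fin 2 :=
  fun p => if p.1.isRight && p.2.isRight then 1 else 0

@[simp] lemma col_inl_left {r t : ℕ} (a : Fin 1) (y : Fin 1 ⊕ Fin t) :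
    col (r := r) (Sum.inl a, y) = 0 := by simp [col]

@[simp] lemma col_inl_right {r t : ℕ} (x : Fin 1 ⊕ Fin r) (b : Fin 1) :
    col (t := t) (x, Sum.inl b) = 0 := by cases x <;> simp [col]

@[simp] lemma col_inr_inr {r t : ℕ} (i : Fin r) (j : Fin t) :
    col (Sum.inr i, Sum.inr j) = 1 := by simp [col]

/-- The 3-vertex path tree used for leaf `i`/`j`. -/
def pathTree (r t : ℕ) (i : Fin r) (j : Fin t) :
    (strongProd (_root_.star r) (_root_.star t)).Subgraph :=
  path3Sub _ (Sum.inr i, Sum.inl 0) (Sum.inr i, Sum.inr j) (Sum.inl 0, Sum.inr j)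
    (by simp [strongProd_adj', star_adj']) (by simp [strongProd_adj', star_adj'])

lemma pathTree_verts (r t : ℕ) (i : Fin r) (j : Fin t) : (pathTree r t i j).verts =
    {(Sum.inr i, Sum.inl 0), (Sum.inr i, Sum.inr j), (Sum.inl 0, Sum.inr j)} := rfl

lemma pathTree_isTree (r t : ℕ) (i : Fin r) (j : Fin t) : (pathTree r t i j).coe.IsTree :=
  path3Sub_isTree _ _ _ _ _ _

lemma pathTree_proper (r t : ℕ) (i : Fin r) (j : Fin t) :
    ∀ x y, (pathTree r t i j).Adj x y → col x ≠ col y := by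
  rintro x y (⟨rfl, rfl⟩ | ⟨rfl, rfl⟩ | ⟨rfl, rfl⟩ | ⟨rfl, rfl⟩) <;> simp

lemma isOddMinor_top_of_equiv {V : Type*} (G : SimpleGraph V) {n : ℕ} {I : Type*}
    (e : Fin n ≃ I) (T' : I → G.Subgraph) (c : V → Fin 2)
    (h1 : ∀ s, (T' s).coe.IsTree)
    (h2 : Pairwise fun s s' => Disjoint (T' s).verts (T' s').verts)
    (h3 : ∀ s, ∀ x y, (T' s).Adj x y → c x ≠ c y)
    (h4 : ∀ s s', s ≠ s' →
      ∃ x y, x ∈ (T' s).verts ∧ y ∈ (T' s').verts ∧ G.Adj x y ∧ c x = c y) :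
    IsOddMinorOf (⊤ : SimpleGraph (Fin n)) G := by
  refine ⟨fun w => T' (e w), c, fun w => h1 _, ?_, fun w => h3 _, ?_⟩
  · intro w w' hne; exact h2 (e.injective.ne hne)
  · intro w w' hadj; exact h4 _ _ (e.injective.ne (by simpa using hadj))

lemma oddMinor_card_le {V : Type*} [Fintype V] {G : SimpleGraph V} {n : ℕ}
    (h : IsOddMinorOf (⊤ : SimpleGraph (Fin n)) G) : n ≤ Fintype.card V := by
  obtain ⟨T, c, htree, hdisj, -, -⟩ := h
  have hne : ∀ w, Nonempty (T w).verts := fun w => (htree w).isConnected.nonempty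
  let f : Fin n → V := fun w => ((hne w).some : (T w).verts).val
  have hf : ∀ w, f w ∈ (T w).verts := fun w => ((hne w).some).2
  have inj : Function.Injective f := by
    intro w w' hww
    by_contra hne'
    exact Set.disjoint_left.mp (hdisj hne') (hf w) (hww ▸ hf w')
  calc n = Fintype.card (Fin n) := (Fintype.card_fin n).symm
    _ ≤ Fintype.card V := Fintype.card_le_of_injective f inj

end Aux

section Aux2

lemma oddHadwiger_ge {V : Type*} [Fintype V] (G : SimpleGraph V) {n : ℕ}
    (h : IsOddMinorOf (⊤ : SimpleGraph (Fin n)) G) : n ≤ oddHadwiger G := by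
  apply le_csSup
  · exact ⟨Fintype.card V, fun m hm => oddMinor_card_le hm⟩
  · exact h

lemma lemA (r t n : ℕ) (hnr : n ≤ r) (hnt : n ≤ t) :
    IsOddMinorOf (⊤ : SimpleGraph (Fin (n + 1)))
      (strongProd (_root_.star r) (_root_.star t)) := by
  set G := strongProd (_root_.star r) (_root_.star t) with hG
  refine isOddMinor_top_of_equiv G
    ((finCongr (by omega : n + 1 = 1 + n)).trans finSumFinEquiv.symm)
    (Sum.elim (fun _ => G.singletonSubgraph (Sum.inl 0, Sum.inl 0))
      (fun k => pathTree r t (Fin.castLE hnr k) (Fin.castLE hnt k)))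
    col ?_ ?_ ?_ ?_
  · rintro (i | k)
    · exact singleton_isTree _ _
    · exact pathTree_isTree _ _ _ _
  · rintro (i | k) (i' | k') hne
    · exact absurd (congrArg Sum.inl (Subsingleton.elim i i')) hne
    · simp [Set.disjoint_left, pathTree_verts]
    · simp [Set.disjoint_left, pathTree_verts]
    · have hk : k ≠ k' := fun h => hne (congrArg Sum.inr h)
      have hkr : Fin.castLE hnr k ≠ Fin.castLE hnr k' :=
        fun h => hk (Fin.castLE_injective hnr h)
      have hkt : Fin.castLE hnt k ≠ Fin.castLE hnt k' :=
        fun h => hk (Fin.castLE_injective hnt h)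
      simp [Set.disjoint_left, pathTree_verts, Prod.ext_iff, hkr, hkt]
  · rintro (i | k) x y hadj
    · simp only [Sum.elim_inl, singletonSubgraph_adj, Pi.bot_apply] at hadj
      exact hadj.elim
    · exact pathTree_proper _ _ _ _ x y hadj
  · rintro (i | k) (i' | k') hne
    · exact absurd (congrArg Sum.inl (Subsingleton.elim i i')) hne
    · refine ⟨(Sum.inl 0, Sum.inl 0), (Sum.inr (Fin.castLE hnr k'), Sum.inl 0), by simp,
        by simp [pathTree_verts], ?_, by simp⟩
      exact Or.inr (Or.inl ⟨rfl, by simp [star_adj']⟩)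
    · refine ⟨(Sum.inr (Fin.castLE hnr k), Sum.inl 0), (Sum.inl 0, Sum.inl 0),
        by simp [pathTree_verts], by simp, ?_, by simp⟩
      exact Or.inr (Or.inl ⟨rfl, by simp [star_adj']⟩)
    · refine ⟨(Sum.inr (Fin.castLE hnr k), Sum.inl 0), (Sum.inl 0, Sum.inr (Fin.castLE hnt k')),
        by simp [pathTree_verts], by simp [pathTree_verts], ?_, by simp⟩
      exact Or.inr (Or.inr ⟨by simp [star_adj'], by simp [star_adj']⟩)

end Aux2

section Aux3

lemma lemB (r t n : ℕ) (hnr : n ≤ r) (hnt : n < t) :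
    IsOddMinorOf (⊤ : SimpleGraph (Fin (n + 2)))
      (strongProd (_root_.star r) (_root_.star t)) := by
  set G := strongProd (_root_.star r) (_root_.star t) with hG
  have hnt' : n ≤ t := hnt.le
  refine isOddMinor_top_of_equiv G
    (((finCongr (by omega : n + 2 = 1 + (n + 1))).trans finSumFinEquiv.symm).trans
      (Equiv.sumCongr (Equiv.refl (Fin 1))
        ((finCongr (by omega : n + 1 = 1 + n)).trans finSumFinEquiv.symm)))
    (Sum.elim (fun _ => G.singletonSubgraph (Sum.inl 0, Sum.inr ⟨n, hnt⟩))
      (Sum.elim (fun _ => G.singletonSubgraph (Sum.inl 0, Sum.inl 0))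
        (fun k => pathTree r t (Fin.castLE hnr k) (Fin.castLE hnt' k))))
    col ?_ ?_ ?_ ?_
  · rintro (i | i | k)
    · exact singleton_isTree _ _
    · exact singleton_isTree _ _
    · exact pathTree_isTree _ _ _ _
  · have hval : ∀ k : Fin n, Fin.castLE hnt' k ≠ (⟨n, hnt⟩ : Fin t) := by
      intro k h
      have := congrArg Fin.val h
      simp at this
      omega
    rintro (i | i | k) (i' | i' | k') hne
    · exact absurd (congrArg Sum.inl (Subsingleton.elim i i')) hne
    · simp [Set.disjoint_left]
    · simp [Set.disjoint_left, pathTree_verts, Prod.ext_iff, (hval k').symm]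
    · simp [Set.disjoint_left]
    · exact absurd (congrArg (Sum.inr ∘ Sum.inl) (Subsingleton.elim i i')) hne
    · simp [Set.disjoint_left, pathTree_verts]
    · simp [Set.disjoint_left, pathTree_verts, Prod.ext_iff, hval k]
    · simp [Set.disjoint_left, pathTree_verts]
    · have hk : k ≠ k' := by rintro rfl; exact hne rfl
      have hkr : Fin.castLE hnr k ≠ Fin.castLE hnr k' :=
        fun h => hk (Fin.castLE_injective hnr h)
      have hkt : Fin.castLE hnt' k ≠ Fin.castLE hnt' k' :=
        fun h => hk (Fin.castLE_injective hnt' h)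
      simp [Set.disjoint_left, pathTree_verts, Prod.ext_iff, hkr, hkt]
  · rintro (i | i | k) x y hadj
    · simp only [Sum.elim_inl, singletonSubgraph_adj, Pi.bot_apply] at hadj
      exact hadj.elim
    · simp only [Sum.elim_inr, Sum.elim_inl, singletonSubgraph_adj, Pi.bot_apply] at hadj
      exact hadj.elim
    · exact pathTree_proper _ _ _ _ x y hadj
  · rintro (i | i | k) (i' | i' | k') hne
    · exact absurd (congrArg Sum.inl (Subsingleton.elim i i')) hne
    · refine ⟨(Sum.inl 0, Sum.inr ⟨n, hnt⟩), (Sum.inl 0, Sum.inl 0), by simp, by simp, ?_, by simp⟩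
      exact Or.inl ⟨rfl, by simp [star_adj']⟩
    · refine ⟨(Sum.inl 0, Sum.inr ⟨n, hnt⟩), (Sum.inr (Fin.castLE hnr k'), Sum.inl 0), by simp,
        by simp [pathTree_verts], ?_, by simp⟩
      exact Or.inr (Or.inr ⟨by simp [star_adj'], by simp [star_adj']⟩)
    · refine ⟨(Sum.inl 0, Sum.inl 0), (Sum.inl 0, Sum.inr ⟨n, hnt⟩), by simp, by simp, ?_, by simp⟩
      exact Or.inl ⟨rfl, by simp [star_adj']⟩
    · exact absurd (congrArg (Sum.inr ∘ Sum.inl) (Subsingleton.elim i i')) hne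
    · refine ⟨(Sum.inl 0, Sum.inl 0), (Sum.inr (Fin.castLE hnr k'), Sum.inl 0), by simp,
        by simp [pathTree_verts], ?_, by simp⟩
      exact Or.inr (Or.inl ⟨rfl, by simp [star_adj']⟩)
    · refine ⟨(Sum.inr (Fin.castLE hnr k), Sum.inl 0), (Sum.inl 0, Sum.inr ⟨n, hnt⟩),
        by simp [pathTree_verts], by simp, ?_, by simp⟩
      exact Or.inr (Or.inr ⟨by simp [star_adj'], by simp [star_adj']⟩)
    · refine ⟨(Sum.inr (Fin.castLE hnr k), Sum.inl 0), (Sum.inl 0, Sum.inl 0),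
        by simp [pathTree_verts], by simp, ?_, by simp⟩
      exact Or.inr (Or.inl ⟨rfl, by simp [star_adj']⟩)
    · refine ⟨(Sum.inr (Fin.castLE hnr k), Sum.inl 0), (Sum.inl 0, Sum.inr (Fin.castLE hnt' k')),
        by simp [pathTree_verts], by simp [pathTree_verts], ?_, by simp⟩
      exact Or.inr (Or.inr ⟨by simp [star_adj'], by simp [star_adj']⟩)

end Aux3

section Aux4

lemma lemB' (r t n : ℕ) (hnr : n < r) (hnt : n ≤ t) :
    IsOddMinorOf (⊤ : SimpleGraph (Fin (n + 2)))
      (strongProd (_root_.star r) (_root_.star t)) := by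
  set G := strongProd (_root_.star r) (_root_.star t) with hG
  have hnr' : n ≤ r := hnr.le
  refine isOddMinor_top_of_equiv G
    (((finCongr (by omega : n + 2 = 1 + (n + 1))).trans finSumFinEquiv.symm).trans
      (Equiv.sumCongr (Equiv.refl (Fin 1))
        ((finCongr (by omega : n + 1 = 1 + n)).trans finSumFinEquiv.symm)))
    (Sum.elim (fun _ => G.singletonSubgraph (Sum.inr ⟨n, hnr⟩, Sum.inl 0))
      (Sum.elim (fun _ => G.singletonSubgraph (Sum.inl 0, Sum.inl 0))
        (fun k => pathTree r t (Fin.castLE hnr' k) (Fin.castLE hnt k))))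
    col ?_ ?_ ?_ ?_
  · rintro (i | i | k)
    · exact singleton_isTree _ _
    · exact singleton_isTree _ _
    · exact pathTree_isTree _ _ _ _
  · have hval : ∀ k : Fin n, Fin.castLE hnr' k ≠ (⟨n, hnr⟩ : Fin r) := by
      intro k h
      have := congrArg Fin.val h
      simp at this
      omega
    rintro (i | i | k) (i' | i' | k') hne
    · exact absurd (congrArg Sum.inl (Subsingleton.elim i i')) hne
    · simp [Set.disjoint_left]
    · simp [Set.disjoint_left, pathTree_verts, Prod.ext_iff, (hval k').symm]
    · simp [Set.disjoint_left]
    · exact absurd (congrArg (Sum.inr ∘ Sum.inl) (Subsingleton.elim i i')) hne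
    · simp [Set.disjoint_left, pathTree_verts]
    · simp [Set.disjoint_left, pathTree_verts, Prod.ext_iff, hval k]
    · simp [Set.disjoint_left, pathTree_verts]
    · have hk : k ≠ k' := by rintro rfl; exact hne rfl
      have hkr : Fin.castLE hnr' k ≠ Fin.castLE hnr' k' :=
        fun h => hk (Fin.castLE_injective hnr' h)
      have hkt : Fin.castLE hnt k ≠ Fin.castLE hnt k' :=
        fun h => hk (Fin.castLE_injective hnt h)
      simp [Set.disjoint_left, pathTree_verts, Prod.ext_iff, hkr, hkt]
  · rintro (i | i | k) x y hadj
    · simp only [Sum.elim_inl, singletonSubgraph_adj, Pi.bot_apply] at hadj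
      exact hadj.elim
    · simp only [Sum.elim_inr, Sum.elim_inl, singletonSubgraph_adj, Pi.bot_apply] at hadj
      exact hadj.elim
    · exact pathTree_proper _ _ _ _ x y hadj
  · rintro (i | i | k) (i' | i' | k') hne
    · exact absurd (congrArg Sum.inl (Subsingleton.elim i i')) hne
    · refine ⟨(Sum.inr ⟨n, hnr⟩, Sum.inl 0), (Sum.inl 0, Sum.inl 0), by simp, by simp, ?_, by simp⟩
      exact Or.inr (Or.inl ⟨rfl, by simp [star_adj']⟩)
    · refine ⟨(Sum.inr ⟨n, hnr⟩, Sum.inl 0), (Sum.inl 0, Sum.inr (Fin.castLE hnt k')), by simp,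
        by simp [pathTree_verts], ?_, by simp⟩
      exact Or.inr (Or.inr ⟨by simp [star_adj'], by simp [star_adj']⟩)
    · refine ⟨(Sum.inl 0, Sum.inl 0), (Sum.inr ⟨n, hnr⟩, Sum.inl 0), by simp, by simp, ?_, by simp⟩
      exact Or.inr (Or.inl ⟨rfl, by simp [star_adj']⟩)
    · exact absurd (congrArg (Sum.inr ∘ Sum.inl) (Subsingleton.elim i i')) hne
    · refine ⟨(Sum.inl 0, Sum.inl 0), (Sum.inr (Fin.castLE hnr' k'), Sum.inl 0), by simp,
        by simp [pathTree_verts], ?_, by simp⟩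
      exact Or.inr (Or.inl ⟨rfl, by simp [star_adj']⟩)
    · refine ⟨(Sum.inl 0, Sum.inr (Fin.castLE hnt k)), (Sum.inr ⟨n, hnr⟩, Sum.inl 0),
        by simp [pathTree_verts], by simp, ?_, by simp⟩
      exact Or.inr (Or.inr ⟨by simp [star_adj'], by simp [star_adj']⟩)
    · refine ⟨(Sum.inr (Fin.castLE hnr' k), Sum.inl 0), (Sum.inl 0, Sum.inl 0),
        by simp [pathTree_verts], by simp, ?_, by simp⟩
      exact Or.inr (Or.inl ⟨rfl, by simp [star_adj']⟩)
    · refine ⟨(Sum.inr (Fin.castLE hnr' k), Sum.inl 0), (Sum.inl 0, Sum.inr (Fin.castLE hnt k')),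
        by simp [pathTree_verts], by simp [pathTree_verts], ?_, by simp⟩
      exact Or.inr (Or.inr ⟨by simp [star_adj'], by simp [star_adj']⟩)

end Aux4

theorem stmt_7 (r t : ℕ) (hr : 1 ≤ r) (ht : 1 ≤ t) :
    (r = t → oddHadwiger (strongProd (star r) (star t)) ≥ r + 1) ∧
    (r ≠ t → oddHadwiger (strongProd (star r) (star t)) ≥ min r t + 2) := by
  constructor
  · rintro rfl
    exact oddHadwiger_ge _ (lemA r r r le_rfl le_rfl)
  · intro hne
    rcases lt_or_gt_of_ne hne with h | h
    · have := oddHadwiger_ge _ (lemB r t r le_rfl h)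
      simpa [min_eq_left h.le] using this
    · have := oddHadwiger_ge _ (lemB' r t t h le_rfl)
      simpa [min_eq_right h.le] using this
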